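/- Let X be an infinite set and let G be a submonoid of the monoid of all functions X → X (under composition, with identity) which is closed under conjugation by bijections (i.e., for every g ∈ G and every bijection γ : X → X, γ⁻¹ ∘ g ∘ γ ∈ G). Then for any permutation α of X, the submonoid generated by G ∪ {α} equals {αⁿ ∘ g : g ∈ G, n ≥ 0}. -/
import Mathlib


theorem stmt_0 {X : Type*} [Infinite X] (G : Set (Function.End X))
    (hid : (1 : Function.End X) ∈ G)
    (hcomp : ∀ f ∈ G, ∀ g ∈ G, f * g ∈ G)
    (hconj : ∀ g ∈ G, ∀ γ : Equiv.Perm X,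
      ((⇑γ.symm ∘ g ∘ ⇑γ : X → X) : Function.End X) ∈ G)
    (α : Equiv.Perm X) :
    (Submonoid.closure (G ∪ {(⇑α : Function.End X)}) : Set (Function.End X)) =
      {f | ∃ g ∈ G, ∃ n : ℕ, f = (show Function.End X from ⇑α) ^ n * g} := by
  set A : Function.End X := ⇑α with hA
  have hpow : ∀ m : ℕ, ∀ x : X, (A ^ m) x = (α ^ m) x := by
    intro m
    induction m with
    | zero => intro x; rfl
    | succ m ih =>
      intro x
      have h1 : A ^ (m + 1) = A ^ m * A := pow_succ A m
      have h2 : (α : Equiv.Perm X) ^ (m + 1) = α ^ m * α := pow_succ α m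
      rw [h1, h2]
      show (A ^ m) (A x) = (α ^ m) (α x)
      exact ih (α x)
  have key : ∀ g : Function.End X, ∀ m : ℕ,
      g * A ^ m = A ^ m * (show Function.End X from ⇑(α ^ m).symm ∘ g ∘ ⇑(α ^ m)) := by
    intro g m
    funext x
    show g ((A ^ m) x) = (A ^ m) ((α ^ m).symm (g ((α ^ m) x)))
    rw [hpow m x, hpow m ((α ^ m).symm (g ((α ^ m) x))), Equiv.apply_symm_apply]
  let S : Submonoid (Function.End X) :=
  { carrier := {f | ∃ g ∈ G, ∃ n : ℕ, f = A ^ n * g}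
    one_mem' := ⟨1, hid, 0, by simp⟩
    mul_mem' := by
      rintro a b ⟨g, hg, n, rfl⟩ ⟨h, hh, m, rfl⟩
      refine ⟨(show Function.End X from ⇑(α ^ m).symm ∘ g ∘ ⇑(α ^ m)) * h,
        hcomp _ (hconj g hg (α ^ m)) _ hh, n + m, ?_⟩
      rw [pow_add, mul_assoc, mul_assoc, ← mul_assoc g, key g m, mul_assoc] }
  have hsub : G ∪ {A} ⊆ ↑S := by
    rintro f (hf | hf)
    · exact ⟨f, hf, 0, by simp⟩
    · rcases hf with rfl
      exact ⟨1, hid, 1, by simp⟩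
  ext f
  constructor
  · intro hf
    exact (Submonoid.closure_le.2 hsub) hf
  · rintro ⟨g, hg, n, rfl⟩
    have hα : A ∈ Submonoid.closure (G ∪ {A}) := Submonoid.subset_closure (Or.inr rfl)
    have hg' : g ∈ Submonoid.closure (G ∪ {A}) := Submonoid.subset_closure (Or.inl hg)
    exact mul_mem (pow_mem hα n) hg'
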